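/- Let L_1,...,L_n be linear forms on ℂ^d with positive integer exponents s_1,...,s_n, let 𝒜 be the associated arrangement, and L(𝒜) its intersection lattice. If 𝒢 ⊆ L(𝒜) is a building set for 𝒜, then min_{W ∈ 𝒢} codim(W)/s(W) = min_{W ∈ L(𝒜)} codim(W)/s(W). -/

import Mathlib

open scoped Classical

private lemma sum_biUnion_le'' {α β : Type*} [DecidableEq β] (s : Finset α) (t : α → Finset β)
    (f : β → ℕ) : ∑ x ∈ s.biUnion t, f x ≤ ∑ i ∈ s, ∑ x ∈ t i, f x := by
  classical
  induction s using Finset.induction_on with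
  | empty => simp
  | insert _ _ ha ih =>
    rename_i a s
    rw [Finset.biUnion_insert, Finset.sum_insert ha]
    calc ∑ x ∈ t a ∪ s.biUnion t, f x
        ≤ ∑ x ∈ t a, f x + ∑ x ∈ s.biUnion t \ t a, f x := by
          rw [← Finset.sum_union (Finset.disjoint_sdiff)]
          exact Finset.sum_le_sum_of_subset (by intro x hx; simp at hx ⊢; tauto)
      _ ≤ ∑ x ∈ t a, f x + ∑ x ∈ s.biUnion t, f x :=
          Nat.add_le_add_left (Finset.sum_le_sum_of_subset Finset.sdiff_subset) _
      _ ≤ _ := Nat.add_le_add_left ih _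

theorem stmt_13 (d n : ℕ)
    (H : Fin n → Submodule ℂ (Fin d → ℂ))
    (hH : ∀ i, Module.finrank ℂ (H i) + 1 = d)
    (s : Fin n → ℕ) (hs : ∀ i, 1 ≤ s i)
    (L : Set (Submodule ℂ (Fin d → ℂ)))
    (hL : L = {W | ∃ S : Finset (Fin n), S.Nonempty ∧ W = ⨅ i ∈ S, H i})
    (𝒢 : Finset (Submodule ℂ (Fin d → ℂ))) (h𝒢L : ↑𝒢 ⊆ L)
    -- building set condition: for every C in the intersection lattice, the minimal
    -- elements of 𝒢 containing C intersect transversally with intersection C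
    (hbuild : ∀ C ∈ L,
      (𝒢.filter (fun G => C ≤ G ∧ ∀ G' ∈ 𝒢, C ≤ G' → G' ≤ G → G' = G)).inf id = C ∧
      d - Module.finrank ℂ C =
        ∑ G ∈ 𝒢.filter (fun G => C ≤ G ∧ ∀ G' ∈ 𝒢, C ≤ G' → G' ≤ G → G' = G),
          (d - Module.finrank ℂ G))
    (ratio : Submodule ℂ (Fin d → ℂ) → ℝ)
    (hratio : ratio = fun (W : Submodule ℂ (Fin d → ℂ)) =>
      ((d - Module.finrank ℂ W : ℕ) : ℝ) /
        (∑ j ∈ Finset.univ.filter (fun j => W ≤ H j), s j : ℕ)) :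
    sInf (ratio '' ↑𝒢) = sInf (ratio '' L) := by
  rcases Nat.eq_zero_or_pos n with hn | hn
  · -- degenerate case: no hyperplanes, both sides are sInf ∅
    subst hn
    have hLempty : L = ∅ := by
      rw [hL]; ext W
      simp only [Set.mem_setOf_eq, Set.mem_empty_iff_false, iff_false]
      rintro ⟨S, ⟨i, -⟩, -⟩
      exact i.elim0
    have h𝒢empty : (𝒢 : Set (Submodule ℂ (Fin d → ℂ))) = ∅ := by
      rw [← Set.subset_empty_iff, ← hLempty]; exact h𝒢L
    rw [hLempty, h𝒢empty]
  · -- main case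
    have hd : 1 ≤ d := by
      have := hH ⟨0, hn⟩; omega
    set codim : Submodule ℂ (Fin d → ℂ) → ℕ := fun W => d - Module.finrank ℂ W with hcodim
    set sW : Submodule ℂ (Fin d → ℂ) → ℕ :=
      fun W => ∑ j ∈ Finset.univ.filter (fun j => W ≤ H j), s j with hsW
    set M : Submodule ℂ (Fin d → ℂ) → Finset (Submodule ℂ (Fin d → ℂ)) :=
      fun C => 𝒢.filter (fun G => C ≤ G ∧ ∀ G' ∈ 𝒢, C ≤ G' → G' ≤ G → G' = G) with hM
    have hratio' : ∀ W, ratio W = (codim W : ℝ) / (sW W : ℝ) := by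
      intro W; rw [hratio]
    -- basic facts about members of L
    have hLle : ∀ W ∈ L, ∃ i, W ≤ H i := by
      intro W hW
      rw [hL] at hW
      obtain ⟨S, ⟨i, hi⟩, rfl⟩ := hW
      exact ⟨i, iInf₂_le i hi⟩
    have hfinrank_lt : ∀ W ∈ L, Module.finrank ℂ W < d := by
      intro W hW
      obtain ⟨i, hi⟩ := hLle W hW
      have h1 := Submodule.finrank_mono hi
      have h2 := hH i
      omega
    have hcodim_pos : ∀ W ∈ L, 0 < codim W := by
      intro W hW; have := hfinrank_lt W hW; simp only [hcodim]; omega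
    have hsW_pos : ∀ W ∈ L, 0 < sW W := by
      intro W hW
      obtain ⟨i, hi⟩ := hLle W hW
      have hmem : i ∈ Finset.univ.filter (fun j => W ≤ H j) := by
        simp [hi]
      calc 0 < s i := hs i
        _ ≤ sW W := Finset.single_le_sum (fun _ _ => Nat.zero_le _) hmem
    have hne_top : ∀ W ∈ L, W ≠ ⊤ := by
      intro W hW hWt
      have := hfinrank_lt W hW
      rw [hWt, finrank_top, Module.finrank_fin_fun] at this
      omega
    have hHL : ∀ i, H i ∈ L := by
      intro i
      rw [hL]
      exact ⟨{i}, Finset.singleton_nonempty i, by simp⟩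
    -- M C is nonempty for C ∈ L
    have hMne : ∀ C ∈ L, (M C).Nonempty := by
      intro C hC
      rcases Finset.eq_empty_or_nonempty (M C) with he | hne
      · exfalso
        have := (hbuild C hC).1
        rw [show (𝒢.filter (fun G => C ≤ G ∧ ∀ G' ∈ 𝒢, C ≤ G' → G' ≤ G → G' = G)) = M C from rfl,
          he, Finset.inf_empty] at this
        exact hne_top C hC this.symm
      · exact hne
    -- every hyperplane of the arrangement belongs to 𝒢
    have hHG : ∀ i, H i ∈ 𝒢 := by
      intro i
      obtain ⟨hinf, hsum⟩ := hbuild (H i) (hHL i)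
      have hMi : (M (H i)).Nonempty := hMne (H i) (hHL i)
      have hcard : (M (H i)).card ≤ 1 := by
        have h1 : ∀ G ∈ M (H i), 1 ≤ d - Module.finrank ℂ G := by
          intro G hG
          have hG𝒢 : G ∈ 𝒢 := Finset.mem_filter.mp hG |>.1
          exact hcodim_pos G (h𝒢L hG𝒢)
        have h2 := Finset.card_nsmul_le_sum (M (H i)) (fun G => d - Module.finrank ℂ G) 1 h1
        have h3 : d - Module.finrank ℂ (H i) = 1 := by have := hH i; omega
        rw [← hsum, h3] at h2
        simpa using h2
      obtain ⟨G, hG⟩ := Finset.card_eq_one.mp (le_antisymm hcard hMi.card_pos)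
      have hGmem : G ∈ M (H i) := by rw [hG]; exact Finset.mem_singleton_self G
      have hG𝒢 : G ∈ 𝒢 := Finset.mem_filter.mp hGmem |>.1
      have : G = H i := by
        have := hinf
        rw [show (𝒢.filter (fun G => H i ≤ G ∧ ∀ G' ∈ 𝒢, H i ≤ G' → G' ≤ G → G' = G)) = M (H i) from rfl, hG, Finset.inf_singleton] at this
        exact this
      rwa [this] at hG𝒢
    -- every hyperplane containing C contains some element of M C
    have hmin : ∀ C ∈ L, ∀ i : Fin n, C ≤ H i → ∃ G ∈ M C, G ≤ H i := by
      intro C hC i hCi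
      set T := 𝒢.filter (fun G => C ≤ G ∧ G ≤ H i) with hT
      have hTne : T.Nonempty := ⟨H i, by simp [hT, hHG i, hCi]⟩
      obtain ⟨m, hmT, hmmin⟩ := Finset.exists_minimal hTne
      have hm := Finset.mem_filter.mp hmT
      refine ⟨m, ?_, hm.2.2⟩
      rw [hM, Finset.mem_filter]
      refine ⟨hm.1, hm.2.1, ?_⟩
      intro G' hG'𝒢 hCG' hG'm
      by_contra hne
      have hG'T : G' ∈ T := by
        rw [hT, Finset.mem_filter]
        exact ⟨hG'𝒢, hCG', le_trans hG'm hm.2.2⟩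
      exact hne (le_antisymm hG'm (hmmin hG'T hG'm))
    -- covering inequality: s(C) ≤ ∑_{G ∈ M C} s(G)
    have hcover : ∀ C ∈ L, sW C ≤ ∑ G ∈ M C, sW G := by
      intro C hC
      have hsub : Finset.univ.filter (fun j => C ≤ H j) ⊆
          (M C).biUnion (fun G => Finset.univ.filter (fun j => G ≤ H j)) := by
        intro j hj
        have hCj : C ≤ H j := (Finset.mem_filter.mp hj).2
        obtain ⟨G, hGM, hGj⟩ := hmin C hC j hCj
        exact Finset.mem_biUnion.mpr ⟨G, hGM, by simp [hGj]⟩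
      calc sW C ≤ ∑ j ∈ (M C).biUnion (fun G => Finset.univ.filter (fun j => G ≤ H j)), s j :=
            Finset.sum_le_sum_of_subset hsub
        _ ≤ ∑ G ∈ M C, sW G := sum_biUnion_le'' _ _ _
    -- key inequality
    have hkey : ∀ C ∈ L, ∃ G ∈ 𝒢, ratio G ≤ ratio C := by
      intro C hC
      obtain ⟨G0, hG0M, hG0min⟩ := Finset.exists_min_image (M C) ratio (hMne C hC)
      have hG0𝒢 : G0 ∈ 𝒢 := (Finset.mem_filter.mp hG0M).1
      refine ⟨G0, hG0𝒢, ?_⟩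
      have hr0 : 0 ≤ ratio G0 := by
        rw [hratio']
        positivity
      have hsWCpos : (0 : ℝ) < (sW C : ℝ) := by exact_mod_cast hsW_pos C hC
      rw [hratio' C, le_div_iff₀ hsWCpos]
      have hsum : (codim C : ℝ) = ∑ G ∈ M C, (codim G : ℝ) := by
        have := (hbuild C hC).2
        simp only [hcodim]
        exact_mod_cast this
      have hterm : ∀ G ∈ M C, ratio G0 * (sW G : ℝ) ≤ (codim G : ℝ) := by
        intro G hGM
        have hG𝒢 : G ∈ 𝒢 := (Finset.mem_filter.mp hGM).1
        have hGL : G ∈ L := h𝒢L hG𝒢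
        have hsWGpos : (0 : ℝ) < (sW G : ℝ) := by exact_mod_cast hsW_pos G hGL
        have := hG0min G hGM
        rw [hratio' G, le_div_iff₀ hsWGpos] at this
        exact this
      calc ratio G0 * (sW C : ℝ) ≤ ratio G0 * (∑ G ∈ M C, (sW G : ℝ)) := by
            apply mul_le_mul_of_nonneg_left _ hr0
            exact_mod_cast hcover C hC
        _ = ∑ G ∈ M C, ratio G0 * (sW G : ℝ) := Finset.mul_sum _ _ _
        _ ≤ ∑ G ∈ M C, (codim G : ℝ) := Finset.sum_le_sum hterm
        _ = (codim C : ℝ) := hsum.symm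
    -- finiteness and assembly
    have hLfin : L.Finite := by
      apply Set.Finite.subset (Set.finite_range (fun S : Finset (Fin n) => ⨅ i ∈ S, H i))
      intro W hW
      rw [hL] at hW
      obtain ⟨S, -, rfl⟩ := hW
      exact ⟨S, rfl⟩
    have h𝒢ne : (ratio '' ↑𝒢).Nonempty := ⟨ratio (H ⟨0, hn⟩), ⟨H ⟨0, hn⟩, hHG _, rfl⟩⟩
    have hLne : (ratio '' L).Nonempty := ⟨ratio (H ⟨0, hn⟩), ⟨H ⟨0, hn⟩, hHL _, rfl⟩⟩
    have hbddL : BddBelow (ratio '' L) := (hLfin.image ratio).bddBelow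
    have hbdd𝒢 : BddBelow (ratio '' ↑𝒢) := ((𝒢.finite_toSet).image ratio).bddBelow
    apply le_antisymm
    · apply le_csInf hLne
      rintro b ⟨C, hC, rfl⟩
      obtain ⟨G, hG𝒢, hGC⟩ := hkey C hC
      exact le_trans (csInf_le hbdd𝒢 ⟨G, hG𝒢, rfl⟩) hGC
    · exact csInf_le_csInf hbddL h𝒢ne (Set.image_mono h𝒢L)
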